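/- arXiv:1811.05969 — 6 statements merged into one kernel-verified Lean document; each statement's English description precedes it below -/
import Mathlib

section
/- Let (g, J, ω) be a Lie algebra with an endomorphism J satisfying J² = -id and ω a closed alternating 2-form with ω(JX,Y) = ω(X,JY). Let a be a J-invariant ω-isotropic ideal. Then a^⊥ is J-invariant, and J induces a well-defined endomorphism J̄ on the quotient Lie algebra a^⊥/a with J̄² = -id, and ω induces a well-defined alternating form ω̄ on a^⊥/a with ω̄(J̄X, Y) = ω̄(X, J̄Y). -/
/-- complex symplectic reduction.  For a `J`-invariant `ω`-isotropic ideal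
`a` of a Lie algebra with `J² = -id`, `ω` closed alternating and `J` symmetric w.r.t.
`ω`:  (1) `a^⊥` is `J`-invariant;  (2) `J` descends to the quotient `a^⊥/a`;
(3) the induced map squares to `-id`;  (4) `ω` descends to a well-defined form on
`a^⊥/a`;  (5) the induced complex structure is symmetric w.r.t. the induced form. -/
theorem stmt_5 (g : Type*) [LieRing g] [LieAlgebra ℝ g]
    (J : g →ₗ[ℝ] g) (hJ : ∀ x, J (J x) = -x)
    (ω : g →ₗ[ℝ] g →ₗ[ℝ] ℝ) (halt : ∀ x, ω x x = 0)
    (hclosed : ∀ x y z : g, ω ⁅x, y⁆ z + ω ⁅y, z⁆ x + ω ⁅z, x⁆ y = 0)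
    (hsym : ∀ x y, ω (J x) y = ω x (J y))
    (a : LieIdeal ℝ g) (haJ : ∀ x ∈ a, J x ∈ a)
    (hiso : ∀ x ∈ a, ∀ y ∈ a, ω x y = 0) :
    (∀ x : g, (∀ z ∈ a, ω x z = 0) → ∀ z ∈ a, ω (J x) z = 0) ∧
    (∀ x y : g, x - y ∈ a → J x - J y ∈ a) ∧
    (∀ x : g, J (J x) + x ∈ a) ∧
    (∀ x x' y y' : g, (∀ z ∈ a, ω x z = 0) → (∀ z ∈ a, ω y z = 0) →
      x - x' ∈ a → y - y' ∈ a → ω x y = ω x' y') ∧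
    (∀ x y : g, (∀ z ∈ a, ω x z = 0) → (∀ z ∈ a, ω y z = 0) →
      ω (J x) y = ω x (J y)) := by
  have skew : ∀ u v : g, ω u v = -ω v u := by
    intro u v
    have h := halt (u + v)
    simp [map_add, halt] at h
    linarith
  refine ⟨?_, ?_, ?_, ?_, fun x y _ _ => hsym x y⟩
  · intro x hx z hz
    rw [hsym]
    exact hx _ (haJ z hz)
  · intro x y hxy
    have := haJ _ hxy
    rwa [map_sub] at this
  · intro x
    rw [hJ]
    simp
  · intro x x' y y' hx hy hxx hyy
    have h1 : ω x (y - y') = 0 := hx _ hyy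
    have h2 : ω (x - x') y = 0 := by rw [skew]; exact neg_eq_zero.mpr (hy _ hxx)
    have h3 : ω (x - x') (y - y') = 0 := hiso _ hxx _ hyy
    simp only [map_sub, LinearMap.sub_apply] at h1 h2 h3
    linarith
end

section
/- Let g be the 4-dimensional Lie algebra h₃ ⊕ ℝ with basis e₁,...,e₄ and only nonzero bracket [e₁,e₂] = e₃, equipped with J₀ sending e₁ ↦ -e₂, e₂ ↦ e₁, e₃ ↦ -e₄, e₄ ↦ e₃ (dually J₀* = e²⊗e₁ - e¹⊗e₂ + e⁴⊗e₃ - e³⊗e₄) and ω₀ = e¹∧e⁴ + e²∧e³. Then J₀ is an integrable complex structure (Nijenhuis tensor vanishes), ω₀ is a closed non-degenerate 2-form, and J₀ is symmetric with respect to ω₀: ω₀(J₀X, Y) = ω₀(X, J₀Y) for all X, Y. -/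
/-- On `h₃ ⊕ ℝ` (basis `e₁,…,e₄`, only nonzero bracket `[e₁,e₂]=e₃`),
the endomorphism `J₀` with `J₀e₁ = -e₂, J₀e₂ = e₁, J₀e₃ = -e₄, J₀e₄ = e₃` and the
2-form `ω₀ = e¹∧e⁴ + e²∧e³` satisfy: `J₀² = -id`, `J₀` is integrable (vanishing
Nijenhuis tensor), `ω₀` is closed and non-degenerate, and `J₀` is symmetric with
respect to `ω₀`. -/
theorem stmt_8 (L : Type*) [LieRing L] [LieAlgebra ℝ L]
    (b : Module.Basis (Fin 4) ℝ L)
    (h01 : ⁅b 0, b 1⁆ = b 2) (h02 : ⁅b 0, b 2⁆ = 0) (h03 : ⁅b 0, b 3⁆ = 0)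
    (h12 : ⁅b 1, b 2⁆ = 0) (h13 : ⁅b 1, b 3⁆ = 0) (h23 : ⁅b 2, b 3⁆ = 0)
    (J : L →ₗ[ℝ] L)
    (hJ0 : J (b 0) = -b 1) (hJ1 : J (b 1) = b 0)
    (hJ2 : J (b 2) = -b 3) (hJ3 : J (b 3) = b 2)
    (ω : L →ₗ[ℝ] L →ₗ[ℝ] ℝ) (halt : ∀ x, ω x x = 0)
    (hω01 : ω (b 0) (b 1) = 0) (hω02 : ω (b 0) (b 2) = 0)
    (hω03 : ω (b 0) (b 3) = 1) (hω12 : ω (b 1) (b 2) = 1)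
    (hω13 : ω (b 1) (b 3) = 0) (hω23 : ω (b 2) (b 3) = 0) :
    (∀ x, J (J x) = -x) ∧
    (∀ x y : L, ⁅x, y⁆ + J (⁅J x, y⁆ + ⁅x, J y⁆) - ⁅J x, J y⁆ = 0) ∧
    (∀ x y z : L, ω ⁅x, y⁆ z + ω ⁅y, z⁆ x + ω ⁅z, x⁆ y = 0) ∧
    (∀ x : L, (∀ y, ω x y = 0) → x = 0) ∧
    (∀ x y : L, ω (J x) y = ω x (J y)) := by
  -- skew-symmetry of ω
  have hskew : ∀ x y : L, ω y x = -ω x y := by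
    intro x y
    have h := halt (x + y)
    simp only [map_add, LinearMap.add_apply, halt] at h
    linarith
  have hω10 : ω (b 1) (b 0) = 0 := by rw [hskew, hω01]; ring
  have hω20 : ω (b 2) (b 0) = 0 := by rw [hskew, hω02]; ring
  have hω30 : ω (b 3) (b 0) = -1 := by rw [hskew, hω03]
  have hω21 : ω (b 2) (b 1) = -1 := by rw [hskew, hω12]
  have hω31 : ω (b 3) (b 1) = 0 := by rw [hskew, hω13]; ring
  have hω32 : ω (b 3) (b 2) = 0 := by rw [hskew, hω23]; ring
  -- skew brackets
  have h10 : ⁅b 1, b 0⁆ = -b 2 := by rw [← lie_skew, h01]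
  have h20 : ⁅b 2, b 0⁆ = 0 := by rw [← lie_skew, h02, neg_zero]
  have h30 : ⁅b 3, b 0⁆ = 0 := by rw [← lie_skew, h03, neg_zero]
  have h21 : ⁅b 2, b 1⁆ = 0 := by rw [← lie_skew, h12, neg_zero]
  have h31 : ⁅b 3, b 1⁆ = 0 := by rw [← lie_skew, h13, neg_zero]
  have h32 : ⁅b 3, b 2⁆ = 0 := by rw [← lie_skew, h23, neg_zero]
  -- coordinates
  have hx : ∀ x : L, ∃ c : Fin 4 → ℝ,
      x = c 0 • b 0 + c 1 • b 1 + c 2 • b 2 + c 3 • b 3 := by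
    intro x
    refine ⟨b.repr x, ?_⟩
    have := b.sum_repr x
    rw [Fin.sum_univ_four] at this
    exact this.symm
  refine ⟨?_, ?_, ?_, ?_, ?_⟩
  · intro x
    obtain ⟨c, rfl⟩ := hx x
    simp [hJ0, hJ1, hJ2, hJ3]
    module
  · intro x y
    obtain ⟨c, rfl⟩ := hx x
    obtain ⟨d, rfl⟩ := hx y
    simp only [map_add, map_smul, lie_add, add_lie, lie_smul, smul_lie, hJ0, hJ1, hJ2, hJ3,
      h01, h02, h03, h12, h13, h23, h10, h20, h30, h21, h31, h32, lie_self,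
      smul_zero, lie_neg, neg_lie, smul_neg, neg_neg, map_neg, map_zero,
      add_zero, zero_add, neg_zero]
    module
  · intro x y z
    obtain ⟨c, rfl⟩ := hx x
    obtain ⟨d, rfl⟩ := hx y
    obtain ⟨e, rfl⟩ := hx z
    simp only [map_add, map_smul, lie_add, add_lie, lie_smul, smul_lie,
      h01, h02, h03, h12, h13, h23, h10, h20, h30, h21, h31, h32, lie_self,
      smul_zero, lie_neg, neg_lie, smul_neg, neg_neg, map_neg, map_zero,
      LinearMap.add_apply, LinearMap.smul_apply, LinearMap.zero_apply, LinearMap.neg_apply,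
      hω01, hω02, hω03, hω12, hω13, hω23, hω10, hω20, hω30, hω21, hω31, hω32, halt,
      smul_eq_mul, add_zero, zero_add, neg_zero]
    ring
  · intro x hxy
    obtain ⟨c, rfl⟩ := hx x
    have e0 := hxy (b 0)
    have e1 := hxy (b 1)
    have e2 := hxy (b 2)
    have e3 := hxy (b 3)
    simp only [map_add, map_smul, LinearMap.add_apply, LinearMap.smul_apply,
      hω01, hω02, hω03, hω12, hω13, hω23, hω10, hω20, hω30, hω21, hω31, hω32, halt,
      smul_eq_mul, add_zero, zero_add, mul_zero, mul_one, mul_neg] at e0 e1 e2 e3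
    have hc0 : c 0 = 0 := by linarith
    have hc1 : c 1 = 0 := by linarith
    have hc2 : c 2 = 0 := by linarith
    have hc3 : c 3 = 0 := by linarith
    simp [hc0, hc1, hc2, hc3]
  · intro x y
    obtain ⟨c, rfl⟩ := hx x
    obtain ⟨d, rfl⟩ := hx y
    simp only [map_add, map_smul, hJ0, hJ1, hJ2, hJ3, map_neg,
      LinearMap.add_apply, LinearMap.smul_apply, LinearMap.neg_apply,
      hω01, hω02, hω03, hω12, hω13, hω23, hω10, hω20, hω30, hω21, hω31, hω32, halt,
      smul_eq_mul]
    ring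
end

section
/- Let z ∈ ℂ \ {0} and consider on ℝ⁴ (with basis e₁,...,e₄) the 2-form ω(z) = Re(z)(e¹∧e⁴ + e²∧e³) + Im(z)(e¹∧e³ - e²∧e⁴). For w ∈ ℂ \ {0}, let F(w) be the linear map with matrix blocks [[Re w, -Im w],[Im w, Re w]] on span{e₁,e₂} and |w|²·Id on span{e₃,e₄}. Then F(w)* ω(z) = ω(w z |w|²), i.e. pulling back ω(z) by F(w) gives ω(wz|w|²). -/
/-- The 2-form `ω(z) = Re(z)(e¹∧e⁴ + e²∧e³) + Im(z)(e¹∧e³ - e²∧e⁴)` on `ℝ⁴`. -/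
noncomputable def omegaOf (z : ℂ) (x y : Fin 4 → ℝ) : ℝ :=
  z.re * ((x 0 * y 3 - x 3 * y 0) + (x 1 * y 2 - x 2 * y 1)) +
  z.im * ((x 0 * y 2 - x 2 * y 0) - (x 1 * y 3 - x 3 * y 1))

/-- The linear automorphism `F(w)` of `ℝ⁴`: the rotation-dilation
`[[Re w, -Im w],[Im w, Re w]]` on `span{e₁,e₂}` and `|w|²·Id` on `span{e₃,e₄}`. -/
noncomputable def FwMap (w : ℂ) (x : Fin 4 → ℝ) : Fin 4 → ℝ :=
  ![w.re * x 0 - w.im * x 1, w.im * x 0 + w.re * x 1,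
    Complex.normSq w * x 2, Complex.normSq w * x 3]

/-- `F(w)* ω(z) = ω(w z |w|²)` for all nonzero `z, w ∈ ℂ`. -/
theorem stmt_9 (z w : ℂ) (hz : z ≠ 0) (hw : w ≠ 0) :
    ∀ x y : Fin 4 → ℝ,
      omegaOf z (FwMap w x) (FwMap w y) =
        omegaOf (w * z * (Complex.normSq w : ℂ)) x y := by
  intro x y
  simp only [omegaOf, FwMap, Matrix.cons_val_zero, Matrix.cons_val_one, Matrix.head_cons,
    Matrix.cons_val_two, Matrix.tail_cons, Matrix.cons_val_three, Complex.mul_re, Complex.mul_im,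
    Complex.ofReal_re, Complex.ofReal_im, Complex.normSq_apply]
  ring
end

section
/- The 8-dimensional real Lie algebra h₅ ⊕ ℝ³, with basis e₁,...,e₈ and only nonzero brackets [e₁,e₂] = e₈ and [e₃,e₄] = -e₈, admits no symplectic structure: there is no closed alternating 2-form ω on it with ω⁴ ≠ 0. -/
/-- The 8-dimensional nilpotent Lie algebra `h₅ ⊕ ℝ³` (basis `e₁,…,e₈`
with only nonzero brackets `[e₁,e₂] = e₈` and `[e₃,e₄] = -e₈`) admits no symplectic
structure: there is no closed non-degenerate alternating 2-form on it. -/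
theorem stmt_13 (L : Type*) [LieRing L] [LieAlgebra ℝ L]
    (b : Module.Basis (Fin 8) ℝ L)
    (h01 : ⁅b 0, b 1⁆ = b 7) (h23 : ⁅b 2, b 3⁆ = -b 7)
    (hzero : ∀ i j : Fin 8, i < j → (i, j) ≠ (0, 1) → (i, j) ≠ (2, 3) →
      ⁅b i, b j⁆ = 0) :
    ¬ ∃ ω : L →ₗ[ℝ] L →ₗ[ℝ] ℝ, (∀ x, ω x x = 0) ∧
      (∀ x y z : L, ω ⁅x, y⁆ z + ω ⁅y, z⁆ x + ω ⁅z, x⁆ y = 0) ∧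
      (∀ x : L, (∀ y, ω x y = 0) → x = 0) := by
  rintro ⟨ω, halt, hcl, hnd⟩
  have hz : ∀ i j : Fin 8, i < j → (i, j) ≠ (0, 1) → (i, j) ≠ (2, 3) →
      ⁅b j, b i⁆ = 0 := by
    intro i j h1 h2 h3
    rw [← lie_skew, hzero i j h1 h2 h3, neg_zero]
  have hb : ∀ i : Fin 8, ω (b 7) (b i) = 0 := by
    intro i
    fin_cases i
    · have := hcl (b 2) (b 3) (b 0)
      rw [h23, hz 0 3 (by decide) (by decide) (by decide),
        hzero 0 2 (by decide) (by decide) (by decide)] at this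
      simpa using this
    · have := hcl (b 2) (b 3) (b 1)
      rw [h23, hz 1 3 (by decide) (by decide) (by decide),
        hzero 1 2 (by decide) (by decide) (by decide)] at this
      simpa using this
    · have := hcl (b 0) (b 1) (b 2)
      rw [h01, hzero 1 2 (by decide) (by decide) (by decide),
        hz 0 2 (by decide) (by decide) (by decide)] at this
      simpa using this
    · have := hcl (b 0) (b 1) (b 3)
      rw [h01, hzero 1 3 (by decide) (by decide) (by decide),
        hz 0 3 (by decide) (by decide) (by decide)] at this
      simpa using this
    · have := hcl (b 0) (b 1) (b 4)
      rw [h01, hzero 1 4 (by decide) (by decide) (by decide),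
        hz 0 4 (by decide) (by decide) (by decide)] at this
      simpa using this
    · have := hcl (b 0) (b 1) (b 5)
      rw [h01, hzero 1 5 (by decide) (by decide) (by decide),
        hz 0 5 (by decide) (by decide) (by decide)] at this
      simpa using this
    · have := hcl (b 0) (b 1) (b 6)
      rw [h01, hzero 1 6 (by decide) (by decide) (by decide),
        hz 0 6 (by decide) (by decide) (by decide)] at this
      simpa using this
    · exact halt (b 7)
  have hω : ω (b 7) = 0 := b.ext fun i => by simpa using hb i
  have h7 : b 7 = 0 := hnd (b 7) fun y => by rw [hω]; rfl
  exact b.ne_zero 7 h7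
end

section
/- Let (ḡ, J̄, ω̄) be a complex symplectic Lie algebra of dimension 4n, V a 2-dimensional real vector space with complex structure I, and g = V ⊕ ḡ ⊕ V* with the bracket determined by tensors ν, τ, f, g, β as in complex symplectic oxidation. If the bracket satisfies the Jacobi identity, then necessarily: (a) for each v ∈ V, f(v) is a derivation of ḡ; and (b) β is a Chevalley–Eilenberg 2-cocycle of ḡ with values in V*, i.e. β([X,Y],Z) + β([Y,Z],X) + β([Z,X],Y) = 0 for all X,Y,Z ∈ ḡ. -/
/-- complex symplectic oxidation setup.  Given a complex symplectic Lie
algebra `(ḡ, J̄, ω̄)`, a 2-dimensional real vector space `V` with complex structure `I`,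
and the bracket on `g = V ⊕ ḡ ⊕ V*` determined by tensors `ν, τ, f, g, β`, if this
bracket satisfies the Jacobi identity then (a) each `f v` is a derivation of `ḡ`, and
(b) `β` is a Chevalley–Eilenberg 2-cocycle of `ḡ` with values in `V*`. -/
theorem stmt_14 (V gb : Type*) [AddCommGroup V] [Module ℝ V]
    [FiniteDimensional ℝ V] (hV : Module.finrank ℝ V = 2)
    (I : V →ₗ[ℝ] V) (hI : ∀ v, I (I v) = -v)
    [LieRing gb] [LieAlgebra ℝ gb] [FiniteDimensional ℝ gb]
    (Jb : gb →ₗ[ℝ] gb) (hJb : ∀ x, Jb (Jb x) = -x)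
    (hJint : ∀ x y : gb, ⁅x, y⁆ + Jb (⁅Jb x, y⁆ + ⁅x, Jb y⁆) - ⁅Jb x, Jb y⁆ = 0)
    (ωb : gb →ₗ[ℝ] gb →ₗ[ℝ] ℝ) (hωalt : ∀ x, ωb x x = 0)
    (hωcl : ∀ x y z : gb, ωb ⁅x, y⁆ z + ωb ⁅y, z⁆ x + ωb ⁅z, x⁆ y = 0)
    (hωnd : ∀ x : gb, (∀ y, ωb x y = 0) → x = 0)
    (hωsym : ∀ x y, ωb (Jb x) y = ωb x (Jb y))
    (ν : V →ₗ[ℝ] V →ₗ[ℝ] gb) (hν : ∀ v, ν v v = 0)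
    (τ : V →ₗ[ℝ] V →ₗ[ℝ] Module.Dual ℝ V) (hτ : ∀ v, τ v v = 0)
    (f : V →ₗ[ℝ] gb →ₗ[ℝ] gb)
    (gm : V →ₗ[ℝ] gb →ₗ[ℝ] Module.Dual ℝ V)
    (β : gb →ₗ[ℝ] gb →ₗ[ℝ] Module.Dual ℝ V) (hβ : ∀ x, β x x = 0)
    (Br : (V × gb × Module.Dual ℝ V) → (V × gb × Module.Dual ℝ V) →
      (V × gb × Module.Dual ℝ V))
    (hBr : ∀ p q, Br p q =
      ((0 : V), ν p.1 q.1 + f p.1 q.2.1 - f q.1 p.2.1 + ⁅p.2.1, q.2.1⁆,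
        gm p.1 q.2.1 - gm q.1 p.2.1 + τ p.1 q.1 + β p.2.1 q.2.1))
    (hJac : ∀ p q r, Br (Br p q) r + Br (Br q r) p + Br (Br r p) q = 0) :
    (∀ (v : V) (x y : gb), f v ⁅x, y⁆ = ⁅f v x, y⁆ + ⁅x, f v y⁆) ∧
    (∀ x y z : gb, β ⁅x, y⁆ z + β ⁅y, z⁆ x + β ⁅z, x⁆ y = 0) := by
  constructor
  · intro v x y
    have h := hJac (v, 0, 0) (0, x, 0) (0, y, 0)
    simp only [hBr, map_zero, LinearMap.zero_apply, zero_add, add_zero, sub_zero, zero_sub,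
      lie_zero, zero_lie, hν, hτ, hβ, map_neg, LinearMap.neg_apply, neg_lie, lie_neg,
      map_sub, map_add, LinearMap.sub_apply, LinearMap.add_apply, Prod.ext_iff,
      Prod.mk_add_mk, Prod.mk_eq_zero, Prod.fst_zero, Prod.snd_zero] at h
    have h2 := h.2.1
    linear_combination (norm := module) -h2 + lie_skew ((f v) y) x
  · intro x y z
    have h := hJac (0, x, 0) (0, y, 0) (0, z, 0)
    simp only [hBr, map_zero, LinearMap.zero_apply, zero_add, add_zero, sub_zero, zero_sub,
      lie_zero, zero_lie, hν, hτ, hβ, map_neg, LinearMap.neg_apply, neg_lie, lie_neg,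
      map_sub, map_add, LinearMap.sub_apply, LinearMap.add_apply, Prod.ext_iff,
      Prod.mk_add_mk, Prod.mk_eq_zero, Prod.fst_zero, Prod.snd_zero] at h
    have h3 := h.2.2
    linear_combination (norm := module) h3
end

section
/- With the oxidation setup g = V ⊕ ḡ ⊕ V* and bracket as above, suppose the bracket is a Lie bracket. Define the 2-form ω on g by ω((v,X,α),(w,Y,γ)) = ω̄(X,Y) + α(w) - γ(v). Then ω is closed (a Chevalley–Eilenberg 2-cocycle of g) if and only if both: (1) ω̄(ν(v,w), X) = g(v,X)(w) - g(w,X)(v) for all v,w ∈ V, X ∈ ḡ; and (2) β(X,Y)(v) = -ω̄(f(v,X),Y) - ω̄(X,f(v,Y)) for all v ∈ V, X,Y ∈ ḡ. -/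
set_option maxHeartbeats 1000000 in
private lemma skew2 {M N : Type*} [AddCommGroup M] [Module ℝ M] [AddCommGroup N]
    [Module ℝ N] (B : M →ₗ[ℝ] M →ₗ[ℝ] N) (h : ∀ x, B x x = 0) (x y : M) :
    B x y = -B y x := by
  have hxy := h (x + y)
  simp only [map_add, LinearMap.add_apply, h, zero_add, add_zero] at hxy
  exact (neg_eq_of_add_eq_zero_right hxy).symm

set_option maxHeartbeats 1000000 in
private lemma tau_cyc (V : Type*) [AddCommGroup V] [Module ℝ V] [FiniteDimensional ℝ V]
    (hV : Module.finrank ℝ V = 2)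
    (τ : V →ₗ[ℝ] V →ₗ[ℝ] Module.Dual ℝ V) (hτ : ∀ v, τ v v = 0) :
    ∀ v w u : V, τ v w u + τ w u v + τ u v w = 0 := by
  have hsk : ∀ v w, τ v w = -τ w v := fun v w => skew2 τ hτ v w
  set T : V →ₗ[ℝ] V →ₗ[ℝ] V →ₗ[ℝ] ℝ :=
    LinearMap.mk₂ ℝ (fun v w => τ v w + (τ w).flip v - (τ v).flip w)
      (by intros; ext; simp; ring)
      (by intros; ext; simp; ring)
      (by intros; ext; simp; ring)
      (by intros; ext; simp; ring) with hTdef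
  have hT : ∀ v w u, T v w u = τ v w u + τ w u v + τ u v w := by
    intro v w u
    have : τ u v = -τ v u := hsk u v
    simp [hTdef, LinearMap.mk₂_apply, LinearMap.flip_apply, this]
    ring
  have hT1 : ∀ v u, T v v u = 0 := by
    intro v u; simp [hTdef, LinearMap.mk₂_apply, LinearMap.flip_apply, hτ]
  have hT2 : ∀ v w, T v w w = 0 := by
    intro v w; simp [hTdef, LinearMap.mk₂_apply, LinearMap.flip_apply, hτ]
  have hT3 : ∀ v w, T v w v = 0 := by
    intro v w
    have h1 : τ w v v = -(τ v w v) := by rw [hsk w v]; simp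
    simp [hTdef, LinearMap.mk₂_apply, LinearMap.flip_apply, h1, hτ]
  have b : Module.Basis (Fin 2) ℝ V := Module.finBasisOfFinrankEq ℝ V hV
  have hrepr : ∀ x : V, ∃ a c : ℝ, x = a • b 0 + c • b 1 := by
    intro x
    refine ⟨b.repr x 0, b.repr x 1, ?_⟩
    conv_lhs => rw [← b.sum_repr x]
    rw [Fin.sum_univ_two]
  have hT0 : ∀ v w u, T v w u = 0 := by
    intro v w u
    obtain ⟨a1, a2, hv⟩ := hrepr v
    obtain ⟨c1, c2, hw⟩ := hrepr w
    obtain ⟨d1, d2, hu⟩ := hrepr u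
    subst hv hw hu
    simp only [map_add, map_smul, LinearMap.add_apply, LinearMap.smul_apply,
      hT1, hT2, hT3, smul_zero, add_zero, zero_add, smul_eq_mul, mul_zero]
  intro v w u
  have h := hT v w u
  rw [hT0] at h
  linarith

set_option maxHeartbeats 1000000 in
/-- With the oxidation setup `g = V ⊕ ḡ ⊕ V*` and the bracket determined
by `ν, τ, f, g, β` (assumed to satisfy the Jacobi identity), the 2-form
`ω((v,X,α),(w,Y,γ)) = ω̄(X,Y) + α(w) - γ(v)` is closed (a Chevalley–Eilenberg
2-cocycle of `g`) if and only if
(1) `ω̄(ν(v,w), X) = g(v,X)(w) - g(w,X)(v)` for all `v, w ∈ V`, `X ∈ ḡ`, and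
(2) `β(X,Y)(v) = -ω̄(f(v,X),Y) - ω̄(X,f(v,Y))` for all `v ∈ V`, `X, Y ∈ ḡ`. -/
theorem stmt_15 (V gb : Type*) [AddCommGroup V] [Module ℝ V]
    [FiniteDimensional ℝ V] (hV : Module.finrank ℝ V = 2)
    [LieRing gb] [LieAlgebra ℝ gb]
    (ωb : gb →ₗ[ℝ] gb →ₗ[ℝ] ℝ) (hωalt : ∀ x, ωb x x = 0)
    (hωcl : ∀ x y z : gb, ωb ⁅x, y⁆ z + ωb ⁅y, z⁆ x + ωb ⁅z, x⁆ y = 0)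
    (ν : V →ₗ[ℝ] V →ₗ[ℝ] gb) (hν : ∀ v, ν v v = 0)
    (τ : V →ₗ[ℝ] V →ₗ[ℝ] Module.Dual ℝ V) (hτ : ∀ v, τ v v = 0)
    (f : V →ₗ[ℝ] gb →ₗ[ℝ] gb)
    (gm : V →ₗ[ℝ] gb →ₗ[ℝ] Module.Dual ℝ V)
    (β : gb →ₗ[ℝ] gb →ₗ[ℝ] Module.Dual ℝ V) (hβ : ∀ x, β x x = 0)
    (Br : (V × gb × Module.Dual ℝ V) → (V × gb × Module.Dual ℝ V) →
      (V × gb × Module.Dual ℝ V))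
    (hBr : ∀ p q, Br p q =
      ((0 : V), ν p.1 q.1 + f p.1 q.2.1 - f q.1 p.2.1 + ⁅p.2.1, q.2.1⁆,
        gm p.1 q.2.1 - gm q.1 p.2.1 + τ p.1 q.1 + β p.2.1 q.2.1))
    (hJac : ∀ p q r, Br (Br p q) r + Br (Br q r) p + Br (Br r p) q = 0)
    (ω : (V × gb × Module.Dual ℝ V) → (V × gb × Module.Dual ℝ V) → ℝ)
    (hω : ∀ p q, ω p q = ωb p.2.1 q.2.1 + p.2.2 q.1 - q.2.2 p.1) :
    (∀ p q r, ω (Br p q) r + ω (Br q r) p + ω (Br r p) q = 0) ↔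
      ((∀ (v w : V) (x : gb), ωb (ν v w) x = gm v x w - gm w x v) ∧
       (∀ (v : V) (x y : gb), β x y v = -ωb (f v x) y - ωb x (f v y))) := by
  have hωsk : ∀ x y, ωb x y = -ωb y x := fun x y => skew2 ωb hωalt x y
  have τcyc := tau_cyc V hV τ hτ
  constructor
  · intro h
    constructor
    · intro v w x
      have H := h (v, 0, 0) (w, 0, 0) (0, x, 0)
      simp only [hBr, hω, hν, hτ, hβ, map_zero, LinearMap.zero_apply,
        LinearMap.add_apply, LinearMap.sub_apply, map_add, map_sub,
        lie_self, zero_lie, lie_zero, add_zero, zero_add, sub_zero, zero_sub,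
        hωalt, map_neg, LinearMap.neg_apply, neg_neg] at H
      linarith [hωcl (0 : gb) (0 : gb) x]
    · intro v x y
      have H := h (v, 0, 0) (0, x, 0) (0, y, 0)
      simp only [hBr, hω, hν, hτ, hβ, map_zero, LinearMap.zero_apply,
        LinearMap.add_apply, LinearMap.sub_apply, map_add, map_sub,
        lie_self, zero_lie, lie_zero, add_zero, zero_add, sub_zero, zero_sub,
        hωalt, map_neg, LinearMap.neg_apply, neg_neg] at H
      have hs := hωsk x (f v y)
      linarith
  · rintro ⟨h1, h2⟩ ⟨v, X, α⟩ ⟨w, Y, γ⟩ ⟨u, Z, δ⟩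
    simp only [hBr, hω, map_zero, LinearMap.zero_apply,
      LinearMap.add_apply, LinearMap.sub_apply, map_add, map_sub,
      add_zero, zero_add, sub_zero]
    linarith [hωcl X Y Z, h1 v w Z, h1 w u X, h1 u v Y, h2 u X Y, h2 v Y Z,
      h2 w Z X, hωsk X (f u Y), hωsk Y (f v Z), hωsk Z (f w X), τcyc v w u]
end
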